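/- Let a be an element of a free non-abelian group F with |a| ≥ 2k for a positive integer k. Then the left translate a·B_{1/k}(a^{-∞}) together with B_{1/k}(a^{+∞}) covers the whole boundary ∂F, where B_{1/k}(v) = {w ∈ ∂F : ρ(v,w) ≤ 1/k}. -/

import Mathlib

/-- The inverse letter. -/
def invL {α : Type*} (p : α × Bool) : α × Bool := (p.1, !p.2)

/-- The formal inverse of a word. -/
def wInv {α : Type*} (W : List (α × Bool)) : List (α × Bool) :=
  (W.map fun p => (p.1, !p.2)).reverse

/-- A word is reduced iff it is the reduced word of the free-group element it represents. -/
def IsReducedWord {α : Type*} [DecidableEq α] (W : List (α × Bool)) : Prop :=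
  (FreeGroup.mk W).toWord = W

/-- A right-infinite reduced word: no two adjacent letters form an inverse pair.  These are
exactly the points of the hyperbolic boundary `∂F`. -/
def BoundaryWord {α : Type*} (s : ℕ → α × Bool) : Prop := ∀ i, s (i + 1) ≠ invL (s i)

/-- The right-infinite word `X A A A ⋯` (requires `A ≠ []`). -/
def infWord {α : Type*} (X A : List (α × Bool)) (hA : A ≠ []) : ℕ → α × Bool := fun i =>
  if h : i < X.length then X.get ⟨i, h⟩
  else A.get ⟨(i - X.length) % A.length, Nat.mod_lt _ (List.length_pos_iff.mpr hA)⟩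

/-- Gromov product of two right-infinite words: the length of their longest common prefix. -/
noncomputable def gpInf2 {α : Type*} (s t : ℕ → α × Bool) : ℕ :=
  sSup {r : ℕ | ∀ i < r, s i = t i}

open scoped Classical in
/-- The boundary metric `ρ(w,v) = 1/((w|v)+1)` on infinite reduced words. -/
noncomputable def rhoB {α : Type*} (s t : ℕ → α × Bool) : ℝ :=
  if s = t then 0 else 1 / ((gpInf2 s t : ℝ) + 1)

/-- The number of letters of the infinite word `s` cancelled in the reduced product of the
word `W` with `s`. -/
def cancelLen {α : Type*} [DecidableEq α] (W : List (α × Bool)) (s : ℕ → α × Bool) : ℕ :=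
  ((List.range W.length).takeWhile fun i =>
    decide (W[W.length - 1 - i]? = some (invL (s i)))).length

/-- Left translation of an infinite reduced word by a free-group element: the reduced
concatenation of the reduced word of `a` with `s`. -/
def boundaryMul {α : Type*} [DecidableEq α] (a : FreeGroup α) (s : ℕ → α × Bool) :
    ℕ → α × Bool := fun i =>
  if h : i < a.toWord.length - cancelLen a.toWord s then
    a.toWord.get ⟨i, lt_of_lt_of_le h (Nat.sub_le _ _)⟩
  else s (i - (a.toWord.length - cancelLen a.toWord s) + cancelLen a.toWord s)

section Aux

variable {α : Type*}

lemma invL_invL (p : α × Bool) : invL (invL p) = p := by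
  cases p with | mk a b => simp [invL]

lemma wInv_length (W : List (α × Bool)) : (wInv W).length = W.length := by simp [wInv]

lemma wInv_getElem (W : List (α × Bool)) (j : ℕ) (h : j < W.length) :
    (wInv W)[j]'(by rw [wInv_length]; exact h) = invL (W[W.length - 1 - j]'(by omega)) := by
  simp [wInv, List.getElem_reverse, List.getElem_map, invL]

lemma getElem_idx_congr (l : List (α × Bool)) {i j : ℕ} (h : i = j) (hi : i < l.length) :
    l[i]'hi = l[j]'(h ▸ hi) := by subst h; rfl

lemma reduced_chain [DecidableEq α] (a : FreeGroup α) (i : ℕ) (h : i + 1 < a.toWord.length) :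
    a.toWord[i + 1]'h ≠ invL (a.toWord[i]'(by omega)) := by
  intro heq
  set W := a.toWord with hW
  have hdecomp : W = W.take i ++
      ((W[i]'(by omega)).1, (W[i]'(by omega)).2) :: ((W[i]'(by omega)).1, !(W[i]'(by omega)).2)
        :: W.drop (i + 2) := by
    conv_lhs => rw [← List.take_append_drop i W]
    rw [List.drop_eq_getElem_cons (show i < W.length by omega),
      List.drop_eq_getElem_cons (show i + 1 < W.length from h)]
    rw [heq]
    simp [invL]
    exact ⟨rfl, rfl⟩
  exact FreeGroup.reduce.not (L₂ := W.take i) (by rw [FreeGroup.reduce_toWord]; exact hdecomp)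

lemma takeWhile_range'_eq (p : ℕ → Bool) :
    ∀ n s c, c ≤ n → (∀ j, j < c → p (s + j) = true) → (c < n → p (s + c) = false) →
      (List.range' s n).takeWhile p = List.range' s c := by
  intro n
  induction n with
  | zero => intro s c hc _ _; simp [Nat.le_zero.mp hc]
  | succ n ih =>
    intro s c hc h1 h2
    rw [List.range'_succ]
    cases c with
    | zero =>
      have hps : p s = false := by simpa using h2 (Nat.succ_pos n)
      simp [List.takeWhile_cons, hps]
    | succ c =>
      have hps : p s = true := by simpa using h1 0 (Nat.succ_pos c)
      rw [List.takeWhile_cons, if_pos hps, List.range'_succ]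
      congr 1
      refine ih (s + 1) c (by omega) (fun j hj => ?_) (fun hcn => ?_)
      · rw [show s + 1 + j = s + (j + 1) by omega]; exact h1 (j + 1) (by omega)
      · rw [show s + 1 + c = s + (c + 1) by omega]; exact h2 (by omega)

lemma rhoB_le_of_agree (s t : ℕ → α × Bool) (k : ℕ) (hk : 0 < k)
    (h : ∀ i < k, s i = t i) : rhoB s t ≤ 1 / (k : ℝ) := by
  unfold rhoB
  split
  · positivity
  · rename_i hne
    have hgp : k ≤ gpInf2 s t := by
      obtain ⟨j, hj⟩ : ∃ j, s j ≠ t j := Function.ne_iff.mp hne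
      refine le_csSup ⟨j, fun r hr => ?_⟩ h
      by_contra h'
      exact hj (hr j (lt_of_not_ge h'))
    rw [div_le_div_iff₀ (by positivity) (by positivity)]
    have : (k : ℝ) ≤ (gpInf2 s t : ℝ) := by exact_mod_cast hgp
    linarith

lemma infWord_lt (X A : List (α × Bool)) (hA : A ≠ []) (i : ℕ) (h : i < X.length) :
    infWord X A hA i = X[i]'h := by
  simp [infWord, h]

lemma infWord_ge (X A : List (α × Bool)) (hA : A ≠ []) (i : ℕ) (h1 : X.length ≤ i)
    (h2 : i - X.length < A.length) :
    infWord X A hA i = A[i - X.length]'h2 := by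
  simp [infWord, Nat.not_lt.mpr h1, Nat.mod_eq_of_lt h2]

end Aux

theorem translate_ball_union_ball_eq_boundary {α : Type*} [DecidableEq α]
    (a : FreeGroup α) (ha : a ≠ 1) (k : ℕ) (hk : 0 < k)
    (hlen : 2 * k ≤ a.toWord.length)
    (X A : List (α × Bool)) (hX : IsReducedWord X) (hAcyc : IsReducedWord (A ++ A))
    (hdec : a.toWord = X ++ A ++ wInv X) (hA : A ≠ []) (hA' : wInv A ≠ [])
    (s : ℕ → α × Bool) (hs : BoundaryWord s) :
    rhoB s (infWord X A hA) ≤ 1 / (k : ℝ) ∨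
      ∃ t : ℕ → α × Bool, BoundaryWord t ∧ rhoB t (infWord X (wInv A) hA') ≤ 1 / (k : ℝ) ∧
        boundaryMul a t = s := by
  set W := a.toWord with hW
  set n := W.length with hn
  have hXl : 0 < A.length := List.length_pos_iff.mpr hA
  have hnlen : n = X.length + A.length + X.length := by
    rw [hn, hdec]; simp [wInv]; ring
  have hkn : k ≤ n := by omega
  have hXAk : k + 1 ≤ X.length + A.length := by omega
  -- letters of W
  have hlcongr : ∀ (l l' : List (α × Bool)) (h : l = l') (i : ℕ) (hi : i < l.length),
      l[i]'hi = l'[i]'(h ▸ hi) := by intro l l' h i hi; subst h; rfl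
  have hW1 : ∀ i (h : i < X.length), W[i]'(by omega) = X[i]'h := by
    intro i h
    rw [hlcongr W (X ++ A ++ wInv X) hdec i (by omega),
      List.getElem_append_left (by simp only [List.length_append, wInv_length]; omega), List.getElem_append_left h]
  have hW2 : ∀ i (h : i < A.length), W[X.length + i]'(by omega) = A[i]'h := by
    intro i h
    rw [hlcongr W (X ++ A ++ wInv X) hdec _ (by omega),
      List.getElem_append_left (by simp only [List.length_append, wInv_length]; omega),
      List.getElem_append_right (by omega)]
    exact getElem_idx_congr A (by omega) _
  have hW3 : ∀ i (h : i < X.length),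
      W[X.length + A.length + i]'(by omega) = invL (X[X.length - 1 - i]'(by omega)) := by
    intro i h
    rw [hlcongr W (X ++ A ++ wInv X) hdec _ (by omega),
      List.getElem_append_right (by simp only [List.length_append, wInv_length]; omega),
      getElem_idx_congr (wInv X) (show X.length + A.length + i - (X ++ A).length = i by
        simp only [List.length_append]; omega)]
    exact wInv_getElem X i h
  have hred : ∀ i (h : i + 1 < n), W[i + 1]'h ≠ invL (W[i]'(by omega)) :=
    fun i h => reduced_chain a i h
  classical
  by_cases hcase : ∀ i < k, s i = W.getD i (s i)
  · -- s stays in the ball around a^{+∞}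
    left
    apply rhoB_le_of_agree s (infWord X A hA) k hk
    intro i hi
    have hsw : s i = W[i]'(by omega) := by
      have := hcase i hi
      rwa [List.getD_eq_getElem _ _ (by omega)] at this
    by_cases hx : i < X.length
    · rw [hsw, infWord_lt _ _ _ _ hx, hW1 i hx]
    · push_neg at hx
      rw [hsw, infWord_ge _ _ _ _ hx (by omega),
        getElem_idx_congr W (show i = X.length + (i - X.length) by omega),
        hW2 _ (by omega)]
  · right
    push_neg at hcase
    have hex : ∃ i, i < k ∧ s i ≠ W.getD i (s i) := by
      obtain ⟨i, h1, h2⟩ := hcase; exact ⟨i, h1, h2⟩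
    obtain ⟨m, ⟨hmk, hmne⟩, hmin⟩ :
        ∃ m, (m < k ∧ s m ≠ W.getD m (s m)) ∧
          ∀ j, j < m → ¬(j < k ∧ s j ≠ W.getD j (s j)) :=
      ⟨Nat.find hex, Nat.find_spec hex, fun j hj => Nat.find_min hex hj⟩
    have hmn : m < n := by omega
    have hsm : s m ≠ W[m]'(by omega) := by
      rwa [List.getD_eq_getElem _ _ (by omega)] at hmne
    have hsj : ∀ j (hj : j < m), s j = W[j]'(by omega) := by
      intro j hj
      have h' := hmin j hj
      have : s j = W.getD j (s j) := by
        by_contra hne; exact h' ⟨by omega, hne⟩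
      rwa [List.getD_eq_getElem _ _ (by omega)] at this
    have hck : k + 1 ≤ n - m := by omega
    set t : ℕ → α × Bool := fun i =>
      if h : i < n - m then invL (W[n - 1 - i]'(by omega)) else s (i - (n - m) + m) with ht
    have T1 : ∀ i (h : i < n - m), t i = invL (W[n - 1 - i]'(by omega)) :=
      fun i h => dif_pos h
    have T2 : ∀ i, n - m ≤ i → t i = s (i - (n - m) + m) :=
      fun i h => dif_neg (by omega)
    -- t is an infinite reduced word
    have hbt : BoundaryWord t := by
      intro i
      by_cases h1 : i + 1 < n - m
      · rw [T1 (i + 1) h1, T1 i (by omega), invL_invL]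
        intro heq
        apply hred (n - 2 - i) (by omega)
        rw [getElem_idx_congr W (show n - 2 - i + 1 = n - 1 - i by omega), ← heq,
          getElem_idx_congr W (show n - 1 - (i + 1) = n - 2 - i by omega)]
      · by_cases h2 : i + 1 = n - m
        · rw [T2 (i + 1) (by omega), T1 i (by omega), invL_invL,
            show i + 1 - (n - m) + m = m by omega,
            getElem_idx_congr W (show n - 1 - i = m by omega)]
          exact hsm
        · rw [T2 (i + 1) (by omega), T2 i (by omega),
            show i + 1 - (n - m) + m = (i - (n - m) + m) + 1 by omega]
          exact hs _
    -- the cancellation length of a·t is exactly n - m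
    have hp1 : ∀ j, j < n - m →
        (decide (W[n - 1 - (0 + j)]? = some (invL (t (0 + j))))) = true := by
      intro j hj
      simp only [zero_add, decide_eq_true_eq]
      rw [List.getElem?_eq_getElem (by omega), T1 j hj, invL_invL]
    have hp2 : n - m < n →
        (decide (W[n - 1 - (0 + (n - m))]? = some (invL (t (0 + (n - m)))))) = false := by
      intro hlt
      simp only [zero_add, decide_eq_false_iff_not]
      rw [List.getElem?_eq_getElem (by omega), T2 (n - m) le_rfl,
        show n - m - (n - m) + m = m by omega]
      intro hcon
      have hWm : W[n - 1 - (n - m)]'(by omega) = invL (s m) := by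
        injection hcon
      rw [getElem_idx_congr W (show n - 1 - (n - m) = m - 1 by omega)] at hWm
      apply hs (m - 1)
      rw [show m - 1 + 1 = m by omega, hsj (m - 1) (by omega), hWm, invL_invL]
    have hcan : cancelLen a.toWord t = n - m := by
      show ((List.range n).takeWhile fun i =>
        decide (W[n - 1 - i]? = some (invL (t i)))).length = n - m
      rw [List.range_eq_range',
        takeWhile_range'_eq _ n 0 (n - m) (by omega) hp1 hp2, List.length_range']
    have hD : a.toWord.length - cancelLen a.toWord t = m := by
      have hWn : a.toWord.length = n := rfl
      rw [hcan, hWn]; omega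
    -- a · t = s
    have hmul : boundaryMul a t = s := by
      funext i
      by_cases hi : i < m
      · have h' : i < a.toWord.length - cancelLen a.toWord t := by rw [hD]; exact hi
        unfold boundaryMul
        rw [dif_pos h', List.get_eq_getElem]
        exact (hsj i hi).symm
      · have h' : ¬ i < a.toWord.length - cancelLen a.toWord t := by rw [hD]; exact hi
        unfold boundaryMul
        rw [dif_neg h', hD, hcan, T2 (i - m + (n - m)) (by omega),
          show i - m + (n - m) - (n - m) + m = i by omega]
    -- t lies in the ball around a^{-∞}
    have hrho : rhoB t (infWord X (wInv A) hA') ≤ 1 / (k : ℝ) := by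
      apply rhoB_le_of_agree t (infWord X (wInv A) hA') k hk
      intro i hi
      rw [T1 i (by omega)]
      by_cases hx : i < X.length
      · rw [infWord_lt _ _ _ _ hx,
          getElem_idx_congr W
            (show n - 1 - i = X.length + A.length + (X.length - 1 - i) by omega),
          hW3 (X.length - 1 - i) (by omega),
          getElem_idx_congr X (show X.length - 1 - (X.length - 1 - i) = i by omega),
          invL_invL]
      · push_neg at hx
        have hia : i - X.length < A.length := by omega
        rw [infWord_ge _ _ _ _ hx (by rw [wInv_length]; omega),
          wInv_getElem A (i - X.length) hia,
          getElem_idx_congr W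
            (show n - 1 - i = X.length + (A.length - 1 - (i - X.length)) by omega),
          hW2 (A.length - 1 - (i - X.length)) (by omega)]
    exact ⟨t, hbt, hrho, hmul⟩
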